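/- Let P be an s-t path and C a cycle in a graph G such that P and C are vertex-disjoint and together cover all vertices of G. Let p₁p₂ be an edge of P and q₁q₂ an edge of C such that p₁q₁ and p₂q₂ are edges of G. Then (P ∪ C) − {p₁p₂, q₁q₂} + {p₁q₁, p₂q₂} is an s-t Hamiltonian path in G. -/

import Mathlib

open SimpleGraph Walk

section Aux
set_option linter.unusedSectionVars false
variable {V : Type*} [DecidableEq V] {G : SimpleGraph V}

private lemma aux_no_dart_to_end {z x : V} (W : G.Walk z x) (hW : W.support.Nodup) :
    ∀ d ∈ W.darts, d.fst ≠ x := by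
  induction W with
  | nil => simp
  | cons h W ih =>
    intro d hd
    rw [Walk.darts_cons] at hd
    simp only [Walk.support_cons, List.nodup_cons] at hW
    rcases List.mem_cons.mp hd with rfl | hd
    · intro hzx
      exact hW.1 (hzx ▸ W.end_mem_support)
    · exact ih hW.2 d hd

private lemma exists_cons_of_dart {x y t : V} (W : G.Walk x t) (hW : W.support.Nodup)
    (hd : ∃ d ∈ W.darts, d.toProd = (x, y)) :
    ∃ (h : G.Adj x y) (W' : G.Walk y t), W = Walk.cons h W' := by
  obtain ⟨d, hd, hde⟩ := hd
  cases W with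
  | nil => simp at hd
  | cons h W' =>
    rw [Walk.darts_cons] at hd
    simp only [Walk.support_cons, List.nodup_cons] at hW
    rcases List.mem_cons.mp hd with rfl | hd
    · injection hde with h1 h2
      subst h2
      exact ⟨h, W', rfl⟩
    · exfalso
      have hx : d.fst = x := congrArg Prod.fst hde
      exact hW.1 (hx ▸ Walk.dart_fst_mem_support_of_mem_darts _ hd)

private lemma cycle_split {x y : V} (C' : G.Walk x x) (hC' : C'.IsCycle)
    (hd : ∃ d ∈ C'.darts, d.toProd = (x, y)) :
    ∃ (h : G.Adj x y) (R : G.Walk y x), C' = Walk.cons h R ∧ R.IsPath := by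
  obtain ⟨d, hd, hde⟩ := hd
  cases C' with
  | nil => simp at hd
  | cons h R =>
    have hR : R.IsPath := ((Walk.cons_isCycle_iff R h).mp hC').1
    rw [Walk.darts_cons] at hd
    rcases List.mem_cons.mp hd with rfl | hd
    · injection hde with h1 h2
      subst h2
      exact ⟨h, R, rfl, hR⟩
    · exfalso
      have hx : d.fst = x := congrArg Prod.fst hde
      exact aux_no_dart_to_end R hR.support_nodup d hd hx

private lemma path_split {s t p₁ p₂ : V} (P : G.Walk s t) (hP : P.IsPath)
    (hd : ∃ d ∈ P.darts, d.toProd = (p₁, p₂)) :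
    ∃ (P₁ : G.Walk s p₁) (h : G.Adj p₁ p₂) (P₂ : G.Walk p₂ t),
      P = P₁.append (Walk.cons h P₂) := by
  obtain ⟨d, hd, hde⟩ := hd
  have hx : d.fst = p₁ := congrArg Prod.fst hde
  have hp₁ : p₁ ∈ P.support := hx ▸ Walk.dart_fst_mem_support_of_mem_darts _ hd
  have hspec := P.take_spec hp₁
  rw [← hspec, Walk.darts_append, List.mem_append] at hd
  rcases hd with hd | hd
  · exfalso
    exact aux_no_dart_to_end _ (hP.takeUntil hp₁).support_nodup d hd hx
  · obtain ⟨h, P₂, heq⟩ := exists_cons_of_dart _ (hP.dropUntil hp₁).support_nodup ⟨d, hd, hde⟩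
    rw [heq] at hspec
    exact ⟨P.takeUntil p₁ hp₁, h, P₂, hspec.symm⟩

private lemma mem_support_iff_mem_tail {u : V} (C : G.Walk u u) (hC : ¬ C.Nil) (v : V) :
    v ∈ C.support ↔ v ∈ C.support.tail := by
  obtain ⟨w, h, q, rfl⟩ := Walk.not_nil_iff.mp hC
  simp only [Walk.support_cons, List.tail_cons, List.mem_cons]
  constructor
  · rintro (rfl | hm)
    · exact q.end_mem_support
    · exact hm
  · exact Or.inr

private lemma cycle_to_path {u q₁ q₂ : V} (C : G.Walk u u) (hC : C.IsCycle)
    (hd : ∃ d ∈ C.darts, d.toProd = (q₁, q₂)) :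
    ∃ D : G.Walk q₁ q₂, D.IsPath ∧ (∀ v, v ∈ D.support ↔ v ∈ C.support) ∧
      (C.edges : Multiset (Sym2 V)) = s(q₁, q₂) ::ₘ (D.edges : Multiset (Sym2 V)) := by
  obtain ⟨d, hd, hde⟩ := hd
  have hx : d.fst = q₁ := congrArg Prod.fst hde
  have hq₁ : q₁ ∈ C.support := hx ▸ Walk.dart_fst_mem_support_of_mem_darts _ hd
  set C' := C.rotate q₁ hq₁ with hC'def
  have hC' : C'.IsCycle := hC.rotate hq₁
  have hdC' : d ∈ C'.darts := (C.rotate_darts q₁ hq₁).perm.mem_iff.mpr hd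
  obtain ⟨h, R, heq, hR⟩ := cycle_split C' hC' ⟨d, hdC', hde⟩
  refine ⟨R.reverse, hR.reverse, ?_, ?_⟩
  · intro v
    have h1 : v ∈ C.support ↔ v ∈ C.support.tail :=
      mem_support_iff_mem_tail C hC.not_nil v
    have h2 : v ∈ C'.support.tail ↔ v ∈ C.support.tail :=
      (C.support_rotate q₁ hq₁).mem_iff
    have h3 : C'.support.tail = R.support := by rw [heq, Walk.support_cons, List.tail_cons]
    rw [Walk.support_reverse, List.mem_reverse, ← h3, h2, ← h1]
  · have h4 : (C.edges : Multiset (Sym2 V)) = (C'.edges : Multiset (Sym2 V)) :=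
      Quot.sound (C.rotate_edges q₁ hq₁).perm.symm
    rw [h4, heq, Walk.edges_cons, Walk.edges_reverse, Multiset.coe_reverse]
    rfl

private lemma cycle_to_path' {u q₁ q₂ : V} (C : G.Walk u u) (hC : C.IsCycle)
    (hq : s(q₁, q₂) ∈ C.edges) :
    ∃ D : G.Walk q₁ q₂, D.IsPath ∧ (∀ v, v ∈ D.support ↔ v ∈ C.support) ∧
      (C.edges : Multiset (Sym2 V)) = s(q₁, q₂) ::ₘ (D.edges : Multiset (Sym2 V)) := by
  obtain ⟨dq, hdq, hdqe⟩ := List.mem_map.mp hq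
  rw [SimpleGraph.dart_edge_eq_mk'_iff] at hdqe
  rcases hdqe with hdqe | hdqe
  · exact cycle_to_path C hC ⟨dq, hdq, hdqe⟩
  · obtain ⟨D, hD, hDs, hDe⟩ := cycle_to_path C hC ⟨dq, hdq, hdqe⟩
    refine ⟨D.reverse, hD.reverse, ?_, ?_⟩
    · intro v
      rw [Walk.support_reverse, List.mem_reverse]
      exact hDs v
    · rw [Walk.edges_reverse, Multiset.coe_reverse, ← Sym2.eq_swap, hDe]

private lemma main_aux (s t u : V)
    (P : G.Walk s t) (hP : P.IsPath)
    (C : G.Walk u u) (hC : C.IsCycle)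
    (hdisj : ∀ v : V, v ∈ P.support → v ∉ C.support)
    (hcover : ∀ v : V, v ∈ P.support ∨ v ∈ C.support)
    (p₁ p₂ q₁ q₂ : V)
    (hdp : ∃ d ∈ P.darts, d.toProd = (p₁, p₂))
    (hq : s(q₁, q₂) ∈ C.edges)
    (ha₁ : G.Adj p₁ q₁) (ha₂ : G.Adj p₂ q₂) :
    ∃ Q : G.Walk s t, Q.IsHamiltonian ∧
      (Q.edges : Multiset (Sym2 V)) =
        (((P.edges : Multiset (Sym2 V)) + (C.edges : Multiset (Sym2 V))) -
          {s(p₁, p₂), s(q₁, q₂)}) + {s(p₁, q₁), s(p₂, q₂)} := by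
  obtain ⟨D, hD, hDsupp, hDedges⟩ := cycle_to_path' C hC hq
  obtain ⟨P₁, h, P₂, rfl⟩ := path_split P hP hdp
  set P' := P₁.append (Walk.cons h P₂) with hP'def
  set Q := P₁.append (Walk.cons ha₁ (D.append (Walk.cons ha₂.symm P₂))) with hQdef
  have hsupP : P'.support = P₁.support ++ P₂.support := by
    rw [hP'def, Walk.support_append, Walk.support_cons, List.tail_cons]
  have hsupQ : Q.support = P₁.support ++ (D.support ++ P₂.support) := by
    rw [hQdef, Walk.support_append, Walk.support_cons, List.tail_cons,
      Walk.support_append, Walk.support_cons, List.tail_cons]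
  have hPnodup : (P₁.support ++ P₂.support).Nodup := hsupP ▸ hP.support_nodup
  have hQnodup : Q.support.Nodup := by
    rw [hsupQ]
    rw [List.nodup_append] at hPnodup ⊢
    obtain ⟨h1, h2, h3⟩ := hPnodup
    refine ⟨h1, ?_, ?_⟩
    · rw [List.nodup_append]
      refine ⟨hD.support_nodup, h2, ?_⟩
      intro a ha b hb hab
      subst hab
      exact hdisj a (by rw [hsupP]; exact List.mem_append_right _ hb) ((hDsupp a).mp ha)
    · intro a ha b hb hab
      subst hab
      rcases List.mem_append.mp hb with hb | hb
      · exact hdisj a (by rw [hsupP]; exact List.mem_append_left _ ha) ((hDsupp a).mp hb)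
      · exact h3 a ha a hb rfl
  have hQmem : ∀ v, v ∈ Q.support := by
    intro v
    rw [hsupQ]
    rcases hcover v with hv | hv
    · rw [hsupP] at hv
      rcases List.mem_append.mp hv with hv | hv
      · exact List.mem_append_left _ hv
      · exact List.mem_append_right _ (List.mem_append_right _ hv)
    · exact List.mem_append_right _ (List.mem_append_left _ ((hDsupp v).mpr hv))
  refine ⟨Q, fun v => List.count_eq_one_of_mem hQnodup (hQmem v), ?_⟩
  have hQe : Q.edges = P₁.edges ++ (s(p₁, q₁) :: (D.edges ++ (s(p₂, q₂) :: P₂.edges))) := by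
    rw [hQdef, Walk.edges_append, Walk.edges_cons, Walk.edges_append, Walk.edges_cons,
      show s(q₂, p₂) = s(p₂, q₂) from Sym2.eq_swap]
  have hPe : P'.edges = P₁.edges ++ (s(p₁, p₂) :: P₂.edges) := by
    rw [hP'def, Walk.edges_append, Walk.edges_cons]
  rw [hQe, hPe, hDedges]
  simp only [← Multiset.coe_add, ← Multiset.cons_coe]
  rw [show ({s(p₁, p₂), s(q₁, q₂)} : Multiset (Sym2 V)) = s(p₁, p₂) ::ₘ s(q₁, q₂) ::ₘ 0 by rfl]
  rw [show ((↑P₁.edges + s(p₁, p₂) ::ₘ ↑P₂.edges) + s(q₁, q₂) ::ₘ (↑D.edges) : Multiset (Sym2 V))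
    = s(p₁, p₂) ::ₘ s(q₁, q₂) ::ₘ (↑P₁.edges + ↑P₂.edges + ↑D.edges) by
      simp only [← Multiset.singleton_add]; abel]
  rw [Multiset.sub_cons, Multiset.erase_cons_head, Multiset.sub_cons, Multiset.erase_cons_head,
    Multiset.sub_zero]
  rw [show ({s(p₁, q₁), s(p₂, q₂)} : Multiset (Sym2 V)) = s(p₁, q₁) ::ₘ s(p₂, q₂) ::ₘ 0 by rfl]
  simp only [← Multiset.singleton_add]
  abel

end Aux

/-- Reconnection claim: let `P` be an `s`-`t` path and `C` a cycle, vertex-disjoint and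
together covering all vertices of `G`. If `p₁p₂` is an edge of `P`, `q₁q₂` an edge of `C`,
and `p₁q₁`, `p₂q₂` are edges of `G`, then `(P ∪ C) − {p₁p₂, q₁q₂} + {p₁q₁, p₂q₂}` is an
`s`-`t` Hamiltonian path in `G`. -/
theorem stmt_15 {V : Type*} [DecidableEq V] (G : SimpleGraph V) (s t u : V)
    (P : G.Walk s t) (hP : P.IsPath)
    (C : G.Walk u u) (hC : C.IsCycle)
    (hdisj : ∀ v : V, v ∈ P.support → v ∉ C.support)
    (hcover : ∀ v : V, v ∈ P.support ∨ v ∈ C.support)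
    (p₁ p₂ q₁ q₂ : V)
    (hp : s(p₁, p₂) ∈ P.edges) (hq : s(q₁, q₂) ∈ C.edges)
    (ha₁ : G.Adj p₁ q₁) (ha₂ : G.Adj p₂ q₂) :
    ∃ Q : G.Walk s t, Q.IsHamiltonian ∧
      (Q.edges : Multiset (Sym2 V)) =
        (((P.edges : Multiset (Sym2 V)) + (C.edges : Multiset (Sym2 V))) -
          {s(p₁, p₂), s(q₁, q₂)}) + {s(p₁, q₁), s(p₂, q₂)} := by
  obtain ⟨dp, hdp, hdpe⟩ := List.mem_map.mp hp
  rw [SimpleGraph.dart_edge_eq_mk'_iff] at hdpe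
  rcases hdpe with hdpe | hdpe
  · exact main_aux s t u P hP C hC hdisj hcover p₁ p₂ q₁ q₂ ⟨dp, hdp, hdpe⟩ hq ha₁ ha₂
  · obtain ⟨Q, hQ, hQe⟩ := main_aux s t u P hP C hC hdisj hcover p₂ p₁ q₂ q₁
      ⟨dp, hdp, hdpe⟩ (by rwa [Sym2.eq_swap] at hq) ha₂ ha₁
    refine ⟨Q, hQ, ?_⟩
    rw [hQe, show s(p₂, p₁) = s(p₁, p₂) from Sym2.eq_swap,
      show s(q₂, q₁) = s(q₁, q₂) from Sym2.eq_swap, Multiset.pair_comm s(p₂, q₂) s(p₁, q₁)]
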